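/- Let U = (H ⊗ H ⊗ I_N) · (P₁ ⊗ I₂ ⊗ S₊ + P₀ ⊗ I₂ ⊗ I_N) · (I₂ ⊗ P₀ ⊗ S₋ + I₂ ⊗ P₁ ⊗ I_N) · (Z ⊗ Z ⊗ I_N) · (H ⊗ H ⊗ I_N), a 4N×4N complex matrix indexed by Fin 2 × Fin 2 × Fin N. Then U is a block encoding of the normalized discrete Laplacian with sub-normalization factor α = 1: for all j, k ∈ Fin N, the entry U((0,0,j), (0,0,k)) equals (L̃₁)_{jk}, where L̃₁ = (1/4)(S₊ + S₋) − (1/2)·I_N = (h²/4)·L₁. -/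
import Mathlib


open Matrix Kronecker

noncomputable section

/-- Cyclic shift matrix `S₊`: `(S₊)_{jk} = 1` iff `j ≡ k+1 (mod N)`. -/
def Sp (N : ℕ) [NeZero N] : Matrix (Fin N) (Fin N) ℂ :=
  Matrix.of fun j k => if j = k + 1 then 1 else 0

/-- Cyclic shift matrix `S₋ = S₊ᵀ`. -/
def Sm (N : ℕ) [NeZero N] : Matrix (Fin N) (Fin N) ℂ := (Sp N)ᵀ

def P0 : Matrix (Fin 2) (Fin 2) ℂ := !![1, 0; 0, 0]
def P1 : Matrix (Fin 2) (Fin 2) ℂ := !![0, 0; 0, 1]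
def Hg : Matrix (Fin 2) (Fin 2) ℂ := ((Real.sqrt 2 : ℝ) : ℂ)⁻¹ • !![1, 1; 1, -1]
def Zg : Matrix (Fin 2) (Fin 2) ℂ := !![1, 0; 0, -1]

/-- The normalized discrete 1D periodic Laplacian `L̃₁ = (1/4)(S₊ + S₋) − (1/2)·I_N`. -/
def Lt1 (N : ℕ) [NeZero N] : Matrix (Fin N) (Fin N) ℂ :=
  (1 / 4 : ℂ) • (Sp N + Sm N) - (1 / 2 : ℂ) • (1 : Matrix (Fin N) (Fin N) ℂ)

lemma SpSm (N : ℕ) [NeZero N] : Sp N * Sm N = 1 := by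
  ext j k
  have key : ∀ i : Fin N, (j = i + 1) ↔ (i = j - 1) := by
    intro i
    rw [eq_sub_iff_add_eq, eq_comm]
  simp only [Sp, Sm, Matrix.mul_apply, Matrix.transpose_apply, Matrix.of_apply,
    ite_mul, one_mul, zero_mul, key]
  rw [Finset.sum_ite_eq' Finset.univ (j-1) (fun i => if k = i + 1 then (1:ℂ) else 0)]
  simp [Matrix.one_apply, sub_add_cancel, eq_comm]

lemma e0 : (Hg * P0 * Zg * Hg) 0 0 = 1/2 := by
  have h2 : ((Real.sqrt 2 : ℝ) : ℂ) * ((Real.sqrt 2 : ℝ) : ℂ) = 2 := by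
    norm_cast; exact Real.mul_self_sqrt (by norm_num)
  have hne : ((Real.sqrt 2 : ℝ) : ℂ) ≠ 0 := by
    intro h; rw [h] at h2; norm_num at h2
  simp [Hg, P0, Zg, Matrix.mul_apply, Fin.sum_univ_two]
  field_simp
  linear_combination -h2

lemma e1 : (Hg * P1 * Zg * Hg) 0 0 = -(1/2) := by
  have h2 : ((Real.sqrt 2 : ℝ) : ℂ) * ((Real.sqrt 2 : ℝ) : ℂ) = 2 := by
    norm_cast; exact Real.mul_self_sqrt (by norm_num)
  have hne : ((Real.sqrt 2 : ℝ) : ℂ) ≠ 0 := by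
    intro h; rw [h] at h2; norm_num at h2
  simp [Hg, P1, Zg, Matrix.mul_apply, Fin.sum_univ_two]
  field_simp
  linear_combination -h2

theorem stmt_2 (n : ℕ) (hn : 1 ≤ n) (N : ℕ) (hN : N = 2 ^ n) [NeZero N]
    (U : Matrix ((Fin 2 × Fin 2) × Fin N) ((Fin 2 × Fin 2) × Fin N) ℂ)
    (hU : U = (Hg ⊗ₖ Hg ⊗ₖ (1 : Matrix (Fin N) (Fin N) ℂ))
      * (P1 ⊗ₖ (1 : Matrix (Fin 2) (Fin 2) ℂ) ⊗ₖ Sp N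
          + P0 ⊗ₖ (1 : Matrix (Fin 2) (Fin 2) ℂ) ⊗ₖ (1 : Matrix (Fin N) (Fin N) ℂ))
      * ((1 : Matrix (Fin 2) (Fin 2) ℂ) ⊗ₖ P0 ⊗ₖ Sm N
          + (1 : Matrix (Fin 2) (Fin 2) ℂ) ⊗ₖ P1 ⊗ₖ (1 : Matrix (Fin N) (Fin N) ℂ))
      * (Zg ⊗ₖ Zg ⊗ₖ (1 : Matrix (Fin N) (Fin N) ℂ))
      * (Hg ⊗ₖ Hg ⊗ₖ (1 : Matrix (Fin N) (Fin N) ℂ))) :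
    ∀ j k : Fin N, U (((0, 0), j)) (((0, 0), k)) = Lt1 N j k := by
  intro j k
  subst hU
  simp only [Matrix.mul_add, Matrix.add_mul, ← Matrix.mul_kronecker_mul, Matrix.one_mul,
    Matrix.mul_one, SpSm, Matrix.add_apply, Matrix.kroneckerMap_apply]
  have h00 := e0
  have h11 := e1
  simp only [Lt1, Matrix.sub_apply, Matrix.smul_apply, Matrix.add_apply, smul_eq_mul]
  rw [h00, h11]
  ring
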